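/- With R = ℤ[h,t]U_p/I as in the universal extended Frobenius algebra (where I is generated by [α][α'] − h([α]+[α']−[min{α,α'}]), [α₁]−[α₂] for units of equal level, and 2[α]), and V = R ⊕ Rx with the stated structure maps and φ_α(A + Bx) = A + B[α] + Bx, the map φ_α is an algebra automorphism: φ_α(m(v,w)) = m(φ_α(v), φ_α(w)) for all v, w ∈ V. -/
import Mathlib


noncomputable section

open MvPolynomial

/-- `U_p ⊆ ℤ_pˣ`: the units of `ℤ_p` which are `≡ 1 mod p` (the kernel of reduction
of units mod `p`). -/
def Up (p : ℕ) [Fact p.Prime] : Subgroup ℤ_[p]ˣ :=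
  MonoidHom.ker (Units.map (PadicInt.toZMod (p := p)).toMonoidHom)

/-- The underlying `p`-adic integer of an element of `U_p`. -/
def upVal {p : ℕ} [Fact p.Prime] (u : Up p) : ℤ_[p] := ((u : ℤ_[p]ˣ) : ℤ_[p])

/-- `u` and `v` have the same level: for all `r`, `p^r ∣ u - 1 ↔ p^r ∣ v - 1`. -/
def SameLevel {p : ℕ} [Fact p.Prime] (u v : Up p) : Prop :=
  ∀ r : ℕ, ((p : ℤ_[p]) ^ r ∣ (upVal u - 1) ↔ (p : ℤ_[p]) ^ r ∣ (upVal v - 1))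

/-- `w` has level `min(level u, level v)`. -/
def MinLevel {p : ℕ} [Fact p.Prime] (w u v : Up p) : Prop :=
  ∀ r : ℕ, ((p : ℤ_[p]) ^ r ∣ (upVal w - 1) ↔
    ((p : ℤ_[p]) ^ r ∣ (upVal u - 1) ∧ (p : ℤ_[p]) ^ r ∣ (upVal v - 1)))

/-- The group ring `ℤ[h,t]U_p`. -/
abbrev GrpRing (p : ℕ) [Fact p.Prime] : Type :=
  MonoidAlgebra (MvPolynomial (Fin 2) ℤ) (Up p)

/-- The image `[α]` of `α ∈ U_p` in the group ring. -/
def cls' {p : ℕ} [Fact p.Prime] (u : Up p) : GrpRing p :=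
  MonoidAlgebra.of (MvPolynomial (Fin 2) ℤ) (Up p) u

/-- The variable `h` in the group ring. -/
def hGR (p : ℕ) [Fact p.Prime] : GrpRing p :=
  algebraMap (MvPolynomial (Fin 2) ℤ) (GrpRing p) (X 0)

/-- The variable `t` in the group ring. -/
def tGR (p : ℕ) [Fact p.Prime] : GrpRing p :=
  algebraMap (MvPolynomial (Fin 2) ℤ) (GrpRing p) (X 1)

/-- The ideal `I` generated by `[α][α'] − h([α]+[α']−[min{α,α'}])`,
`[α₁]−[α₂]` for units of equal level, and `2[α]`. -/
def Irel (p : ℕ) [Fact p.Prime] : Ideal (GrpRing p) :=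
  Ideal.span
    ({x | ∃ u v w : Up p, MinLevel w u v ∧
        x = cls' u * cls' v - hGR p * (cls' u + cls' v - cls' w)} ∪
     {x | ∃ u v : Up p, SameLevel u v ∧ x = cls' u - cls' v} ∪
     {x | ∃ u : Up p, x = 2 * cls' u})

/-- `R = ℤ[h,t]U_p/I`. -/
abbrev RU (p : ℕ) [Fact p.Prime] : Type := GrpRing p ⧸ Irel p

/-- `[α]` in `R`. -/
def cls {p : ℕ} [Fact p.Prime] (u : Up p) : RU p := Ideal.Quotient.mk (Irel p) (cls' u)
/-- `h` in `R`. -/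
def hR (p : ℕ) [Fact p.Prime] : RU p := Ideal.Quotient.mk (Irel p) (hGR p)
/-- `t` in `R`. -/
def tR (p : ℕ) [Fact p.Prime] : RU p := Ideal.Quotient.mk (Irel p) (tGR p)

/-- `V = R ⊕ Rx`; `(A,B)` stands for `A + Bx`. -/
abbrev VU (p : ℕ) [Fact p.Prime] : Type := RU p × RU p

/-- `m(A+Bx, C+Dx) = AC + BDt + (AD+BC+BDh)x`. -/
def mU {p : ℕ} [Fact p.Prime] (v w : VU p) : VU p :=
  (v.1 * w.1 + v.2 * w.2 * tR p, v.1 * w.2 + v.2 * w.1 + v.2 * w.2 * hR p)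

/-- `φ_α(A + Bx) = A + B[α] + Bx`. -/
def phiU {p : ℕ} [Fact p.Prime] (u : Up p) (v : VU p) : VU p :=
  (v.1 + v.2 * cls u, v.2)

lemma two_cls {p : ℕ} [Fact p.Prime] (u : Up p) : 2 * cls u = 0 := by
  rw [cls, ← map_ofNat (Ideal.Quotient.mk (Irel p)) 2, ← map_mul,
    Ideal.Quotient.eq_zero_iff_mem]
  exact Ideal.subset_span (Or.inr ⟨u, rfl⟩)

lemma sq_cls {p : ℕ} [Fact p.Prime] (u : Up p) : cls u * cls u = hR p * cls u := by
  have h : cls' u * cls' u - hGR p * (cls' u + cls' u - cls' u) ∈ Irel p :=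
    Ideal.subset_span (Or.inl (Or.inl ⟨u, u, u, fun r => by tauto, rfl⟩))
  have := (Ideal.Quotient.eq_zero_iff_mem).2 h
  rw [map_sub, sub_eq_zero] at this
  simpa [cls, hR, add_sub_cancel_right] using this

/-- In the universal extended Frobenius algebra, `φ_α` is an algebra automorphism:
`φ_α(m(v,w)) = m(φ_α(v), φ_α(w))`. -/
theorem phiU_mul (p : ℕ) [Fact p.Prime] (u : Up p) (v w : VU p) :
    phiU u (mU v w) = mU (phiU u v) (phiU u w) := by
  obtain ⟨A, B⟩ := v
  obtain ⟨C, D⟩ := w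
  have h2 := two_cls u
  have hsq := sq_cls u
  simp only [phiU, mU, Prod.mk.injEq]
  constructor
  · linear_combination (-(B * D)) * hsq
  · linear_combination (-(B * D)) * h2

end
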